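/- Let p and q be distinct primes and set ξ = log q / log p (a positive irrational real number). Assume (a,b) is an upper or lower best approximation for ξ, and set α = p^a/q^b. Let (a₁,b₁),…,(a_N,b_N) enumerate without repetition the upper and lower best approximations (m,k) for ξ with m ≤ a and k ≤ b, let 𝒱(α) = {x ∈ ℕ₀^N : Σᵢ xᵢaᵢ = a and Σᵢ xᵢbᵢ = b}, and for x ∈ ℕ₀^N and t > 0 set f_x(t) = (Σᵢ xᵢ·(log max(p^{aᵢ}, q^{bᵢ}))^t)^{1/t}. Suppose S ⊆ 𝒱(α) satisfies min_{x∈S} f_x(t) = min_{x∈𝒱(α)} f_x(t) for every t > 0. Then the set Vert(S) of vertices (extreme points) of the convex hull of S in ℝ^N also satisfies min_{x∈Vert(S)} f_x(t) = min_{x∈𝒱(α)} f_x(t) for every t > 0. -/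

import Mathlib

open Real Finset

/-- `𝒩` is encoded by pairs `x : ℕ × ℕ` with `x ≠ (0,0)`.
The upper set `𝒰(ξ) = {(a,b) ∈ 𝒩 : a > bξ}`. -/
def Uset (ξ : ℝ) : Set (ℕ × ℕ) := {x | x ≠ (0, 0) ∧ (x.2 : ℝ) * ξ < (x.1 : ℝ)}

/-- The lower set `ℒ(ξ) = {(a,b) ∈ 𝒩 : a < bξ}`. -/
def Lset (ξ : ℝ) : Set (ℕ × ℕ) := {x | x ≠ (0, 0) ∧ (x.1 : ℝ) < (x.2 : ℝ) * ξ}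

/-- `𝒢 = {(a,b) ∈ 𝒩 : gcd(a,b) = 1}`. -/
def Gset : Set (ℕ × ℕ) := {x | x ≠ (0, 0) ∧ Nat.Coprime x.1 x.2}

/-- `𝒰₁(ξ)`: elements `(a,b)` of `𝒰(ξ)` with `a/b ≤ m/n` (by cross multiplication)
for every `(m,n) ∈ 𝒰(ξ)` with `m ≤ a`. -/
def U1 (ξ : ℝ) : Set (ℕ × ℕ) :=
  {x | x ∈ Uset ξ ∧ ∀ y ∈ Uset ξ, y.1 ≤ x.1 → x.1 * y.2 ≤ y.1 * x.2}

/-- `𝒰₂(ξ)`: elements `(a,b)` of `𝒰(ξ)` with `a/b ≤ m/n` for every `(m,n) ∈ 𝒰(ξ)`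
with `n ≤ b`. -/
def U2 (ξ : ℝ) : Set (ℕ × ℕ) :=
  {x | x ∈ Uset ξ ∧ ∀ y ∈ Uset ξ, y.2 ≤ x.2 → x.1 * y.2 ≤ y.1 * x.2}

/-- `ℒ₁(ξ)`: elements `(a,b)` of `ℒ(ξ)` with `a/b ≥ m/n` for every `(m,n) ∈ ℒ(ξ)`
with `m ≤ a`. -/
def L1 (ξ : ℝ) : Set (ℕ × ℕ) :=
  {x | x ∈ Lset ξ ∧ ∀ y ∈ Lset ξ, y.1 ≤ x.1 → y.1 * x.2 ≤ x.1 * y.2}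

/-- `ℒ₂(ξ)`: elements `(a,b)` of `ℒ(ξ)` with `a/b ≥ m/n` for every `(m,n) ∈ ℒ(ξ)`
with `n ≤ b`. -/
def L2 (ξ : ℝ) : Set (ℕ × ℕ) :=
  {x | x ∈ Lset ξ ∧ ∀ y ∈ Lset ξ, y.2 ≤ x.2 → y.1 * x.2 ≤ x.1 * y.2}

/-- `(a,b)` is an upper or lower best approximation for `ξ`. -/
def BestApprox (ξ : ℝ) (x : ℕ × ℕ) : Prop :=
  x ∈ Gset ∩ U1 ξ ∨ x ∈ Gset ∩ L2 ξ

/-- A factorization of a positive rational `α ≠ 1`: a tuple of fractions `r n / s n` of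
positive integers, none equal to `1`, with `gcd (r m) (s n) = 1` for all `m, n`, whose
product is `α`. -/
def IsFactorization (α : ℚ) {N : ℕ} (r s : Fin N → ℕ) : Prop :=
  (∀ n, 0 < r n) ∧ (∀ n, 0 < s n) ∧ (∀ n, (r n : ℚ) / (s n : ℚ) ≠ 1) ∧
    (∀ m n, Nat.Coprime (r m) (s n)) ∧ (∏ n, (r n : ℚ) / (s n : ℚ)) = α

/-- The measure function `f_A(t) = (Σₙ m(rₙ/sₙ)^t)^{1/t}` of a factorization, where
`m(rₙ/sₙ) = log max(rₙ, sₙ)`. -/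
noncomputable def fmeas {N : ℕ} (r s : Fin N → ℕ) (t : ℝ) : ℝ :=
  (∑ n, (Real.log ((max (r n) (s n) : ℕ) : ℝ)) ^ t) ^ (1 / t)

/-- The measure function of a factorization vector `x`:
`f_x(t) = (Σᵢ xᵢ (log max(p^{aᵢ}, q^{bᵢ}))^t)^{1/t}`. -/
noncomputable def fvec (p q : ℕ) {N : ℕ} (ab : Fin N → ℕ × ℕ) (x : Fin N → ℕ)
    (t : ℝ) : ℝ :=
  (∑ i, (x i : ℝ) *
    (Real.log ((max (p ^ (ab i).1) (q ^ (ab i).2) : ℕ) : ℝ)) ^ t) ^ (1 / t)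

/-- The set `𝒱(α)` of factorization vectors. -/
def Vvec (a b : ℕ) {N : ℕ} (ab : Fin N → ℕ × ℕ) : Set (Fin N → ℕ) :=
  {x | (∑ i, x i * (ab i).1 = a) ∧ (∑ i, x i * (ab i).2 = b)}

/-- The embedding of integer vectors into `ℝ^N`. -/
def embed {N : ℕ} (x : Fin N → ℕ) : Fin N → ℝ := fun i => (x i : ℝ)

/-- The set of vertices of the convex hull of `S`: points `x ∈ S` not in the convex
hull of `S \ {x}`. -/
def VertSet {N : ℕ} (S : Set (Fin N → ℕ)) : Set (Fin N → ℕ) :=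
  {x | x ∈ S ∧ embed x ∉ convexHull ℝ (embed '' (S \ {x}))}

lemma hull_le_aux {N : ℕ} (c : Fin N → ℝ) (m : ℝ) (T : Set (Fin N → ℕ))
    (hT : ∀ y ∈ T, m ≤ ∑ i, (y i : ℝ) * c i) {u : Fin N → ℝ}
    (hu : u ∈ convexHull ℝ (embed '' T)) : m ≤ ∑ i, u i * c i := by
  have hlin : IsLinearMap ℝ (fun w : Fin N → ℝ => ∑ i, w i * c i) :=
    ⟨fun x y => by simp [add_mul, Finset.sum_add_distrib],
     fun r x => by simp [Finset.mul_sum, mul_assoc]⟩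
  have h := convexHull_min (s := embed '' T) (t := {w : Fin N → ℝ | m ≤ ∑ i, w i * c i})
    (by rintro _ ⟨y, hy, rfl⟩; exact hT y hy) (convex_halfSpace_ge hlin m)
  exact h hu

lemma embed_inj {N : ℕ} {x y : Fin N → ℕ} (h : embed x = embed y) : x = y := by
  funext i
  have := congrFun h i
  simp only [embed] at this
  exact_mod_cast this

lemma exists_vertex_min {N : ℕ} (c : Fin N → ℝ) :
    ∀ n : ℕ, ∀ S : Set (Fin N → ℕ), S.Finite → S.ncard ≤ n → S.Nonempty →
      ∃ v ∈ VertSet S, ∀ x ∈ S, ∑ i, (v i : ℝ) * c i ≤ ∑ i, (x i : ℝ) * c i := by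
  intro n
  induction n with
  | zero =>
      intro S hfin hcard hne
      rw [Nat.le_zero, Set.ncard_eq_zero hfin] at hcard
      simp [hcard] at hne
  | succ n IH =>
      intro S hfin hcard hne
      obtain ⟨x, hxF, hxmin⟩ := hfin.toFinset.exists_min_image
        (fun y => ∑ i, (y i : ℝ) * c i) (by simpa using hne)
      rw [Set.Finite.mem_toFinset] at hxF
      replace hxmin : ∀ y ∈ S, ∑ i, (x i : ℝ) * c i ≤ ∑ i, (y i : ℝ) * c i := by
        intro y hy; exact hxmin y (hfin.mem_toFinset.2 hy)
      by_cases hvx : embed x ∈ convexHull ℝ (embed '' (S \ {x}))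
      · -- x is not a vertex; use induction on S \ {x}
        have hS'fin : (S \ {x}).Finite := hfin.subset Set.diff_subset
        have hS'ne : (S \ {x}).Nonempty := by
          rcases Set.eq_empty_or_nonempty (S \ {x}) with h | h
          · rw [h] at hvx; simp at hvx
          · exact h
        have hcard' : (S \ {x}).ncard ≤ n := by
          have := Set.ncard_diff_singleton_lt_of_mem hxF hfin
          omega
        obtain ⟨v, hvV, hvmin⟩ := IH _ hS'fin hcard' hS'ne
        obtain ⟨hv1, hv2⟩ := hvV
        have hvS : v ∈ S := hv1.1
        have hvne : v ≠ x := by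
          intro h; exact hv1.2 (by simp [h])
        have hvlex : ∑ i, (v i : ℝ) * c i ≤ ∑ i, (x i : ℝ) * c i :=
          hull_le_aux c _ _ (fun y hy => hvmin y hy) hvx
        have hminS : ∀ y ∈ S, ∑ i, (v i : ℝ) * c i ≤ ∑ i, (y i : ℝ) * c i := by
          intro y hy
          by_cases h : y = x
          · subst h; exact hvlex
          · exact hvmin y ⟨hy, by simpa using h⟩
        refine ⟨v, ⟨hvS, ?_⟩, hminS⟩
        intro hcon
        -- contradiction with hv2 : embed v ∉ convexHull (embed '' ((S \ {x}) \ {v}))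
        have hSv : S \ {v} = insert x ((S \ {x}) \ {v}) := by
          ext y
          simp only [Set.mem_diff, Set.mem_singleton_iff, Set.mem_insert_iff]
          constructor
          · rintro ⟨hyS, hyv⟩
            by_cases h : y = x
            · exact Or.inl h
            · exact Or.inr ⟨⟨hyS, h⟩, hyv⟩
          · rintro (rfl | ⟨⟨h1, h2⟩, h3⟩)
            · exact ⟨hxF, fun h => hvne h.symm⟩
            · exact ⟨h1, h3⟩
        rcases Set.eq_empty_or_nonempty ((S \ {x}) \ {v}) with hBe | hBne
        · rw [hSv, hBe] at hcon
          simp only [Set.image_insert_eq, Set.image_empty, insert_empty_eq, Set.image_singleton,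
            convexHull_singleton, Set.mem_singleton_iff] at hcon
          exact hvne (embed_inj hcon)
        · have himB : (embed '' ((S \ {x}) \ {v})).Nonempty := hBne.image _
          rw [hSv, Set.image_insert_eq, convexHull_insert himB, mem_convexJoin] at hcon
          obtain ⟨u, hu, w, hw, hseg⟩ := hcon
          rw [Set.mem_singleton_iff] at hu; subst hu
          obtain ⟨b1, b2, hb1, hb2, hbsum, hbeq⟩ := hseg
          have hS'eq : S \ {x} = insert v ((S \ {x}) \ {v}) := by
            rw [Set.insert_diff_singleton, Set.insert_eq_self.2 hv1]
          rw [hS'eq, Set.image_insert_eq, convexHull_insert himB, mem_convexJoin] at hvx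
          obtain ⟨u', hu', w', hw', hseg'⟩ := hvx
          rw [Set.mem_singleton_iff] at hu'; subst hu'
          obtain ⟨a1, a2, ha1, ha2, hasum, haeq⟩ := hseg'
          -- hbeq : b1 • embed x + b2 • w = embed v
          -- haeq : a1 • embed v + a2 • w' = embed x
          by_cases h1 : b1 * a1 = 1
          · have hb1le : b1 ≤ 1 := by linarith
            have ha1le : a1 ≤ 1 := by linarith
            have hb1' : b1 = 1 := by nlinarith
            have ha1' : a1 = 1 := by nlinarith
            have hb2' : b2 = 0 := by linarith
            have hx' : embed x = embed v := by
              rw [← hbeq, hb1', hb2']; simp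
            exact hvne (embed_inj hx'.symm)
          · have hle : b1 * a1 ≤ 1 := by nlinarith
            have hd : 0 < 1 - b1 * a1 := lt_of_le_of_ne (by linarith) (by
              intro h; exact h1 (by linarith))
            have hkey : embed v =
                ((b1 * a2) / (1 - b1 * a1)) • w' + (b2 / (1 - b1 * a1)) • w := by
              funext i
              have e1 := congrFun hbeq i
              have e2 := congrFun haeq i
              simp only [Pi.add_apply, Pi.smul_apply, smul_eq_mul] at e1 e2 ⊢
              rw [div_mul_eq_mul_div, div_mul_eq_mul_div, ← add_div,
                eq_div_iff hd.ne']
              linear_combination -e1 - b1 * e2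
            have hsum : (b1 * a2) / (1 - b1 * a1) + b2 / (1 - b1 * a1) = 1 := by
              field_simp
              linear_combination b1 * hasum + hbsum
            have hmemv : embed v ∈ convexHull ℝ (embed '' ((S \ {x}) \ {v})) := by
              rw [hkey]
              exact (convex_convexHull ℝ _) hw' hw
                (by positivity) (by positivity) hsum
            exact hv2 hmemv
      · exact ⟨x, ⟨hxF, hvx⟩, hxmin⟩

/-- Theorem `ConvexHulls`: if `S ⊆ 𝒱(α)` is an infimum set for `α`, then
`Vert(S)` is also an infimum set for `α`. -/
theorem stmt_7 (p q : ℕ) (hp : p.Prime) (hq : q.Prime) (hpq : p ≠ q)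
    (ξ : ℝ) (hξ : ξ = Real.log q / Real.log p)
    (a b : ℕ) (hba : BestApprox ξ (a, b))
    (N : ℕ) (ab : Fin N → ℕ × ℕ) (hinj : Function.Injective ab)
    (hmem : ∀ i, BestApprox ξ (ab i) ∧ (ab i).1 ≤ a ∧ (ab i).2 ≤ b)
    (hall : ∀ y : ℕ × ℕ, BestApprox ξ y → y.1 ≤ a → y.2 ≤ b → ∃ i, ab i = y)
    (S : Set (Fin N → ℕ)) (hS : S ⊆ Vvec a b ab)
    (hmin : ∀ t : ℝ, 0 < t →
      sInf ((fun x => fvec p q ab x t) '' S) =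
        sInf ((fun x => fvec p q ab x t) '' Vvec a b ab)) :
    ∀ t : ℝ, 0 < t →
      sInf ((fun x => fvec p q ab x t) '' VertSet S) =
        sInf ((fun x => fvec p q ab x t) '' Vvec a b ab) := by
  -- S is finite
  have hfinS : S.Finite := by
    have hbig : {x : Fin N → ℕ | ∀ i, x i ≤ a + b}.Finite := by
      have : {x : Fin N → ℕ | ∀ i, x i ≤ a + b} =
          Set.pi Set.univ (fun _ : Fin N => Set.Iic (a + b)) := by
        ext x; simp [Set.mem_pi, Pi.le_def]
      rw [this]
      exact Set.Finite.pi fun _ => Set.finite_Iic _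
    refine hbig.subset ?_
    intro x hx
    obtain ⟨h1, h2⟩ := hS hx
    intro i
    have hi1 : x i * (ab i).1 ≤ a := by
      rw [← h1]
      exact Finset.single_le_sum (f := fun j => x j * (ab j).1)
        (fun j _ => Nat.zero_le _) (Finset.mem_univ i)
    have hi2 : x i * (ab i).2 ≤ b := by
      rw [← h2]
      exact Finset.single_le_sum (f := fun j => x j * (ab j).2)
        (fun j _ => Nat.zero_le _) (Finset.mem_univ i)
    have hne0 : ab i ≠ (0, 0) := by
      rcases (hmem i).1 with h | h
      · exact h.1.1
      · exact h.1.1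
    have hpos : 1 ≤ (ab i).1 + (ab i).2 := by
      by_contra h
      push_neg at h
      exact hne0 (Prod.ext_iff.2 ⟨by omega, by omega⟩)
    have hle : x i ≤ x i * ((ab i).1 + (ab i).2) := Nat.le_mul_of_pos_right _ hpos
    have heq : x i * ((ab i).1 + (ab i).2) = x i * (ab i).1 + x i * (ab i).2 :=
      Nat.mul_add _ _ _
    omega
  intro t ht
  set c : Fin N → ℝ :=
    fun i => (Real.log ((max (p ^ (ab i).1) (q ^ (ab i).2) : ℕ) : ℝ)) ^ t with hc
  have hcnn : ∀ i, 0 ≤ c i := by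
    intro i
    apply Real.rpow_nonneg
    apply Real.log_nonneg
    have : 1 ≤ max (p ^ (ab i).1) (q ^ (ab i).2) :=
      le_trans (Nat.one_le_pow _ _ hp.pos) (le_max_left _ _)
    exact_mod_cast this
  have hfveceq : ∀ x : Fin N → ℕ, fvec p q ab x t = (∑ i, (x i : ℝ) * c i) ^ (1 / t) := by
    intro x; rfl
  rcases Set.eq_empty_or_nonempty S with hSe | hSne
  · have hzero : VertSet S = ∅ := by
      rw [hSe]; ext x; simp [VertSet]
    have h := hmin t ht
    rw [hSe, Set.image_empty] at h
    rw [hzero, Set.image_empty]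
    exact h
  · obtain ⟨v, hvV, hvmin⟩ := exists_vertex_min c S.ncard S hfinS le_rfl hSne
    have hfv : ∀ x ∈ S, fvec p q ab v t ≤ fvec p q ab x t := by
      intro x hx
      rw [hfveceq, hfveceq]
      apply Real.rpow_le_rpow
      · exact Finset.sum_nonneg fun i _ => mul_nonneg (Nat.cast_nonneg _) (hcnn i)
      · exact hvmin x hx
      · positivity
    set f : (Fin N → ℕ) → ℝ := fun x => fvec p q ab x t with hf
    have himg : f '' VertSet S ⊆ f '' S := Set.image_mono (fun x hx => hx.1)
    have hfinI : (f '' S).Finite := hfinS.image _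
    have hVne : (f '' VertSet S).Nonempty := ⟨f v, Set.mem_image_of_mem _ hvV⟩
    have le1 : sInf (f '' S) ≤ sInf (f '' VertSet S) :=
      csInf_le_csInf hfinI.bddBelow hVne himg
    have le2 : sInf (f '' VertSet S) ≤ sInf (f '' S) := by
      have h1 : sInf (f '' VertSet S) ≤ f v :=
        csInf_le (hfinI.subset himg).bddBelow (Set.mem_image_of_mem _ hvV)
      have h2 : f v ≤ sInf (f '' S) := by
        apply le_csInf ⟨f v, Set.mem_image_of_mem _ hvV.1⟩
        rintro y ⟨x, hx, rfl⟩
        exact hfv x hx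
      exact h1.trans h2
    rw [← hmin t ht]
    exact le_antisymm le2 le1
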